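/- Let G be a Hausdorff topological group. If the map id_G × π : G × (G × [0,1]) → G × C G is not a quotient map, where π : G × [0,1] → C G is the cone quotient map and G × C G carries the product topology of G with the quotient-topologized cone C G (i.e., if the quotient topology and the product topology on G × C G differ), then the diagonal right action map (G*G) × G → G*G, ([x,y,t], h) ↦ [x·h, y·h, t], is not continuous (G*G with the quotient topology, the domain with the product topology). -/

import Mathlib

open Set

/-- The cone relation on `X × [0,1]`: identify `(x,0) ~ (x',0)`. -/
abbrev coneRel (X : Type*) : X × Icc (0 : ℝ) 1 → X × Icc (0 : ℝ) 1 → Prop :=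
  fun p q => p = q ∨ ((p.2 : ℝ) = 0 ∧ (q.2 : ℝ) = 0)

/-- The cone `C X` with the quotient topology. -/
abbrev Cone (X : Type*) := Quot (coneRel X)

/-- The join relation on `X × Y × [0,1]`: identify `(x,y,0) ~ (x',y,0)` and
`(x,y,1) ~ (x,y',1)`. -/
abbrev joinRel (X Y : Type*) :
    X × Y × Icc (0 : ℝ) 1 → X × Y × Icc (0 : ℝ) 1 → Prop := fun p q =>
  p = q ∨ ((p.2.2 : ℝ) = 0 ∧ (q.2.2 : ℝ) = 0 ∧ p.2.1 = q.2.1)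
        ∨ ((p.2.2 : ℝ) = 1 ∧ (q.2.2 : ℝ) = 1 ∧ p.1 = q.1)

/-- The join `X * Y` with the quotient topology. -/
abbrev Join (X Y : Type*) := Quot (joinRel X Y)


noncomputable def halfI : Icc (0:ℝ) 1 → Icc (0:ℝ) 1 := fun t =>
  ⟨(t:ℝ)/2, ⟨by linarith [t.2.1], by linarith [t.2.2]⟩⟩

lemma continuous_halfI : Continuous halfI :=
  Continuous.subtype_mk (continuous_subtype_val.div_const 2) _

noncomputable def dblI : Icc (0:ℝ) 1 → Icc (0:ℝ) 1 := fun t => projIcc 0 1 zero_le_one (2*(t:ℝ))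

lemma continuous_dblI : Continuous dblI :=
  continuous_projIcc.comp (continuous_const.mul continuous_subtype_val)

lemma dblI_of_zero (t : Icc (0:ℝ) 1) (h : (t:ℝ) = 0) : (dblI t : ℝ) = 0 := by
  simp [dblI, projIcc, h]

lemma halfI_le_half (t : Icc (0:ℝ) 1) : (halfI t : ℝ) ≤ 1/2 := by
  have := t.2.2; simp only [halfI]; linarith

lemma dblI_halfI (t : Icc (0:ℝ) 1) : dblI (halfI t) = t := by
  apply Subtype.ext
  have h1 := t.2.1; have h2 := t.2.2
  simp only [dblI, halfI, projIcc]
  rw [show (2:ℝ)*((t:ℝ)/2) = t by ring]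
  simp [min_eq_right h2, max_eq_right h1]

variable (G : Type*) [Group G] [TopologicalSpace G] [IsTopologicalGroup G] [T2Space G]

/-- The map `id_G × π : G × (G × [0,1]) → G × C G`, where `π` is the cone
quotient map and the codomain carries the product topology of `G` with the
quotient-topologized cone. -/
def idTimesConeProj : G × (G × Icc (0 : ℝ) 1) → G × Cone G := fun p =>
  (p.1, Quot.mk (coneRel G) p.2)

/-- The diagonal right action `(G * G) × G → G * G`,
`([x,y,t], h) ↦ [x·h, y·h, t]`. -/
def joinAct : Join G G × G → Join G G := fun p =>
  Quot.lift
    (fun x : G × G × Icc (0 : ℝ) 1 =>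
      Quot.mk (joinRel G G) (x.1 * p.2, x.2.1 * p.2, x.2.2))
    (by
      rintro a b (rfl | ⟨h0a, h0b, hy⟩ | ⟨h1a, h1b, hx⟩)
      · rfl
      · exact Quot.sound (Or.inr (Or.inl ⟨h0a, h0b, by rw [hy]⟩))
      · exact Quot.sound (Or.inr (Or.inr ⟨h1a, h1b, by rw [hx]⟩)))
    p.1

/-- The map `C G → G * G`, `[x,t] ↦ [x,1,t/2]`. -/
noncomputable def coneToJoin : Cone G → Join G G :=
  Quot.lift (fun z => Quot.mk (joinRel G G) (z.1, 1, halfI z.2))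
    (by
      rintro a b (rfl | ⟨h0a, h0b⟩)
      · rfl
      · refine Quot.sound (Or.inr (Or.inl ⟨?_, ?_, rfl⟩)) <;>
          simp [halfI, h0a, h0b])

lemma continuous_coneToJoin : Continuous (coneToJoin G) :=
  continuous_quot_lift _
    (continuous_quot_mk.comp
      (continuous_fst.prodMk (continuous_const.prodMk
        (continuous_halfI.comp continuous_snd))))


/-- If the quotient and product topologies on `G × C G` differ, i.e. the map
`id_G × π : G × (G × [0,1]) → G × C G` is not a quotient map, then the
diagonal right action of `G` on the quotient-topologized join `G * G` is not
continuous. -/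
theorem joinAct_not_continuous_of_not_isQuotientMap
    (h : ¬ Topology.IsQuotientMap (idTimesConeProj G)) : ¬ Continuous (joinAct G) := by
  intro hc
  apply h
  rw [Topology.isQuotientMap_iff, Topology.isCoinducing_iff, and_comm]
  constructor
  · rintro ⟨g, c⟩
    obtain ⟨z, rfl⟩ := Quot.exists_rep c
    exact ⟨(g, z), rfl⟩
  intro U
  rw [iff_comm]
  constructor
  · intro hU
    exact hU.preimage (continuous_fst.prodMk (continuous_quot_mk.comp continuous_snd))
  · intro hU
    -- β' : G × Cone G → Join G G, (y, [x,t]) ↦ [x*y, y, t/2], continuous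
    set β : G × Cone G → Join G G := fun p => joinAct G (coneToJoin G p.2, p.1) with hβ
    have hβc : Continuous β :=
      hc.comp (((continuous_coneToJoin G).comp continuous_snd).prodMk continuous_fst)
    -- the saturated open set V' in G × G × I
    set V : Set (G × G × Icc (0:ℝ) 1) :=
      {a | (a.2.1, (a.1 * a.2.1⁻¹, dblI a.2.2)) ∈ idTimesConeProj G ⁻¹' U ∨ (1:ℝ)/2 < a.2.2}
      with hV
    have hφc : Continuous fun a : G × G × Icc (0:ℝ) 1 =>
        ((a.2.1, (a.1 * a.2.1⁻¹, dblI a.2.2)) : G × (G × Icc (0:ℝ) 1)) := by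
      refine (continuous_fst.comp continuous_snd).prodMk (Continuous.prodMk ?_ ?_)
      · exact continuous_fst.mul ((continuous_fst.comp continuous_snd).inv)
      · exact continuous_dblI.comp ((continuous_snd.comp continuous_snd))
    have hVopen : IsOpen V := by
      apply IsOpen.union
      · exact hU.preimage hφc
      · exact isOpen_Ioi.preimage
          (continuous_subtype_val.comp ((continuous_snd.comp continuous_snd)))
    -- V is saturated for the join relation
    have hsat : ∀ a b, joinRel G G a b → (a ∈ V) = (b ∈ V) := by
      rintro a b (rfl | ⟨h0a, h0b, hy⟩ | ⟨h1a, h1b, hx⟩)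
      · rfl
      · have hpe : idTimesConeProj G (a.2.1, (a.1 * a.2.1⁻¹, dblI a.2.2)) =
            idTimesConeProj G (b.2.1, (b.1 * b.2.1⁻¹, dblI b.2.2)) := by
          simp only [idTimesConeProj]
          rw [hy]
          exact congrArg _ (Quot.sound (Or.inr ⟨dblI_of_zero _ h0a, dblI_of_zero _ h0b⟩))
        simp only [hV, mem_setOf_eq, mem_preimage, hpe, h0a, h0b]
      · have ha2 : (1:ℝ)/2 < a.2.2 := by rw [h1a]; norm_num
        have hb2 : (1:ℝ)/2 < b.2.2 := by rw [h1b]; norm_num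
        simp only [hV, mem_setOf_eq, ha2, hb2, or_true]
    -- the open set S in the join
    set S : Set (Join G G) := {c | Quot.lift (· ∈ V) hsat c} with hS
    have hSopen : IsOpen S := by
      rw [← isQuotientMap_quot_mk.isOpen_preimage]
      exact hVopen
    have hUeq : U = β ⁻¹' S := by
      ext p
      obtain ⟨y, c⟩ := p
      induction c using Quot.ind with
      | _ z =>
        obtain ⟨x, t⟩ := z
        have hmem : (y, Quot.mk (coneRel G) (x, t)) ∈ β ⁻¹' S ↔
            ((1 * y : G), ((x * y) * (1 * y : G)⁻¹, dblI (halfI t))) ∈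
              idTimesConeProj G ⁻¹' U ∨ (1:ℝ)/2 < (halfI t : ℝ) := Iff.rfl
        rw [hmem]
        have hnot : ¬ ((1:ℝ)/2 < (halfI t : ℝ)) := not_lt.mpr (halfI_le_half t)
        simp only [one_mul, mul_inv_cancel_right, dblI_halfI, hnot, or_false,
          mem_preimage, idTimesConeProj]
    rw [hUeq]
    exact hSopen.preimage hβc
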